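/- For every positive integer r, the minimum number of columns in a binary covering array with r rows is CAN(r,2) = min{ n : C(n−1, ⌊n/2⌋ − 1) ≥ r }. -/

import Mathlib

set_option maxHeartbeats 1000000

open Finset FinsetFamily

/-- Two vectors over `Fin k` are qualitatively independent if every ordered
pair of letters occurs in some coordinate. -/
def QIVec {n k : ℕ} (u v : Fin n → Fin k) : Prop :=
  ∀ a b : Fin k, ∃ i, u i = a ∧ v i = b

lemma exists_lower_subset {β : Type*} [LinearOrder β] (s : Finset β) :
    ∀ N ≤ #s, ∃ t ⊆ s, #t = N ∧ ∀ x ∈ s, ∀ y ∈ t, x ≤ y → x ∈ t := by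
  classical
  induction s using Finset.strongInduction with
  | _ s ih =>
    intro N hN
    rcases eq_or_lt_of_le hN with h | h
    · exact ⟨s, Finset.Subset.refl _, h.symm, fun x hx _ _ _ => hx⟩
    · have hne : s.Nonempty := by
        rw [← Finset.card_pos]; omega
      set M := s.max' hne with hM
      have hMs : M ∈ s := s.max'_mem hne
      have hss : s.erase M ⊂ s := Finset.erase_ssubset hMs
      have hcard : #(s.erase M) = #s - 1 := Finset.card_erase_of_mem hMs
      obtain ⟨t, hts, htc, hlow⟩ := ih _ hss N (by omega)
      refine ⟨t, hts.trans (Finset.erase_subset _ _), htc, ?_⟩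
      intro x hx y hy hxy
      have hyM : y ≠ M := fun h => (Finset.mem_erase.1 (hts hy)).1 h
      by_cases hxM : x = M
      · exfalso
        have : y ≤ M := s.le_max' y (hts hy |> (Finset.erase_subset _ _))
        exact hyM (le_antisymm this (hxM ▸ hxy))
      · exact hlow x (Finset.mem_erase.2 ⟨hxM, hx⟩) y hy hxy

lemma shadow_image_map {α β : Type*} [DecidableEq α] [DecidableEq β] (f : α ↪ β)
    (𝒜 : Finset (Finset α)) :
    ∂ (𝒜.image fun A => A.map f) = (∂ 𝒜).image fun A => A.map f := by
  ext t
  simp only [Finset.mem_shadow_iff, Finset.mem_image]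
  constructor
  · rintro ⟨s, ⟨A, hA, rfl⟩, a, ha, rfl⟩
    obtain ⟨b, hb, rfl⟩ := Finset.mem_map.1 ha
    exact ⟨A.erase b, ⟨A, hA, b, hb, rfl⟩, (Finset.map_erase f A b)⟩
  · rintro ⟨s, ⟨A, hA, a, ha, rfl⟩, rfl⟩
    exact ⟨A.map f, ⟨A, hA, rfl⟩, f a, Finset.mem_map_of_mem f ha,
      (Finset.map_erase f A a).symm⟩

lemma card_mul_le_card_shadow_mul_sub {α : Type*} [DecidableEq α] {S : Finset α}
    {𝒞 : Finset (Finset α)} {r : ℕ} (hsub : ∀ A ∈ 𝒞, A ⊆ S) (hsized : ∀ A ∈ 𝒞, #A = r) :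
    𝒞.card * r ≤ #(∂ 𝒞) * (#S - r + 1) := by
  classical
  set f : {x // x ∈ S} ↪ α := Function.Embedding.subtype _ with hf
  set 𝒞' : Finset (Finset {x // x ∈ S}) :=
    (univ : Finset (Finset {x // x ∈ S})).filter (fun A => A.map f ∈ 𝒞) with h𝒞'
  have himg : 𝒞'.image (fun A => A.map f) = 𝒞 := by
    apply Finset.Subset.antisymm
    · intro B hB
      obtain ⟨A, hA, rfl⟩ := Finset.mem_image.1 hB
      exact (Finset.mem_filter.1 hA).2
    · intro B hB
      refine Finset.mem_image.2 ⟨B.subtype (· ∈ S), ?_, ?_⟩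
      · rw [Finset.mem_filter]
        refine ⟨Finset.mem_univ _, ?_⟩
        rw [hf, Finset.subtype_map, Finset.filter_true_of_mem (fun x hx => hsub B hB hx)]
        exact hB
      · rw [hf, Finset.subtype_map, Finset.filter_true_of_mem (fun x hx => hsub B hB hx)]
  have hinj : Function.Injective (fun A : Finset {x // x ∈ S} => A.map f) :=
    fun A B h => Finset.map_injective f h
  have hc1 : #𝒞' = #𝒞 := by rw [← himg, Finset.card_image_of_injective _ hinj]
  have hc2 : #(∂ 𝒞') = #(∂ 𝒞) := by
    rw [← himg, shadow_image_map, Finset.card_image_of_injective _ hinj]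
  have hsized' : Set.Sized r (𝒞' : Set (Finset {x // x ∈ S})) := by
    intro A hA
    have := hsized _ (Finset.mem_filter.1 hA).2
    rwa [Finset.card_map] at this
  have := Finset.card_mul_le_card_shadow_mul hsized'
  rwa [hc1, hc2, Fintype.card_coe] at this

lemma central_choose (j : ℕ) :
    (2 * (j + 1)).choose (j + 1) = 2 * ((2 * (j + 1) - 1).choose (j + 1)) := by
  have h1 : (2 * j + 1 + 1).choose (j + 1) = (2 * j + 1).choose j + (2 * j + 1).choose (j + 1) :=
    by simpa [Nat.succ_eq_add_one] using Nat.choose_succ_succ (2 * j + 1) j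
  have h2 : (2 * j + 1).choose (2 * j + 1 - j) = (2 * j + 1).choose j :=
    Nat.choose_symm (by omega)
  rw [show 2 * j + 1 - j = j + 1 from by omega] at h2
  have h3 : 2 * (j + 1) = 2 * j + 1 + 1 := by omega
  have h4 : 2 * (j + 1) - 1 = 2 * j + 1 := by omega
  rw [h3, Nat.add_sub_cancel, h1, h2]
  omega

/-- A complement-free family of `k`-sets in a `2k`-element ground set has a shadow
at least as large as itself. -/
lemma card_le_card_shadow_middle {k : ℕ} (hk : 1 ≤ k) (F : Finset (Finset (Fin (2 * k))))
    (hs : ∀ A ∈ F, #A = k) (hcf : ∀ A ∈ F, Aᶜ ∉ F) : #F ≤ #(∂ F) := by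
  classical
  set S : Finset (Fin (2 * k)) := attachFin (range (2 * k - 1))
      (fun m hm => lt_of_lt_of_le (mem_range.1 hm) (by omega)) with hS
  have hScard : #S = 2 * k - 1 := by rw [hS, card_attachFin, card_range]
  have hFsub : F ⊆ powersetCard k univ := fun A hA =>
    mem_powersetCard.2 ⟨subset_univ _, hs A hA⟩
  have hFcsub : Fᶜˢ ⊆ powersetCard k univ := by
    intro A hA
    rw [mem_compls] at hA
    refine mem_powersetCard.2 ⟨subset_univ _, ?_⟩
    have h1 := hs _ hA
    have h2 : #(Aᶜ) = Fintype.card (Fin (2 * k)) - #A := Finset.card_compl A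
    have h4 : #A ≤ Fintype.card (Fin (2 * k)) := by
      rw [← Finset.card_univ]; exact Finset.card_le_card (subset_univ _)
    rw [Fintype.card_fin] at h2 h4
    omega
  have hdisj : Disjoint F Fᶜˢ := by
    rw [Finset.disjoint_left]
    intro A hA hA'
    exact hcf _ (mem_compls.1 hA') (by simpa using hA)
  have hcount : 2 * #F ≤ (2 * k).choose k := by
    have h1 := Finset.card_union_of_disjoint hdisj
    have hle := Finset.card_le_card (Finset.union_subset hFsub hFcsub)
    rw [h1, card_compls] at hle
    rw [Finset.card_powersetCard, card_univ, Fintype.card_fin] at hle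
    omega
  have hchoose : (2 * k).choose k = 2 * ((2 * k - 1).choose k) := by
    obtain ⟨j, rfl⟩ : ∃ j, k = j + 1 := ⟨k - 1, by omega⟩
    exact central_choose j
  have hhalf : #F ≤ (2 * k - 1).choose k := by omega
  have hScardpow : #(powersetCard k S) = (2 * k - 1).choose k := by
    rw [card_powersetCard, hScard]
  set s' : Finset (Colex (Finset (Fin (2 * k)))) := (powersetCard k S).image toColex
    with hs'
  have htoColexInj := ((toColex (α := Finset (Fin (2 * k)))).injective)
  have hs'card : #s' = (2 * k - 1).choose k := by
    rw [hs', Finset.card_image_of_injective _ htoColexInj, hScardpow]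
  obtain ⟨t', ht's, ht'card, ht'low⟩ := exists_lower_subset s' #F (by omega)
  set 𝒞 : Finset (Finset (Fin (2 * k))) := t'.image ofColex with h𝒞
  have hofColexInj : Function.Injective (ofColex : Colex (Finset (Fin (2 * k))) → _) :=
    fun A B h => ofColex_inj.1 h
  have h𝒞card : #𝒞 = #F := by rw [h𝒞, Finset.card_image_of_injective _ hofColexInj, ht'card]
  have h𝒞mem : ∀ A : Finset (Fin (2 * k)), A ∈ 𝒞 ↔ toColex A ∈ t' := by
    intro A
    rw [h𝒞, Finset.mem_image]
    constructor
    · rintro ⟨B, hB, rfl⟩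
      simpa using hB
    · intro hA
      exact ⟨toColex A, hA, rfl⟩
  have h𝒞S : ∀ A ∈ 𝒞, A ⊆ S ∧ #A = k := by
    intro A hA
    have h1 := ht's ((h𝒞mem A).1 hA)
    rw [hs', Finset.mem_image] at h1
    obtain ⟨B, hB, hBe⟩ := h1
    have : B = A := htoColexInj hBe
    subst this
    exact (mem_powersetCard.1 hB).imp id id
  have h𝒞init : Finset.Colex.IsInitSeg 𝒞 k := by
    constructor
    · exact fun A hA => (h𝒞S A hA).2
    · rintro A B hA ⟨hBA, hBcard⟩
      have hBS : B ⊆ S := by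
        intro t ht
        have hAS := (h𝒞S A hA).1
        rw [hS, mem_attachFin, mem_range]
        have hlt : toColex (image Fin.val B) < toColex (image Fin.val A) := by
          rwa [Finset.Colex.toColex_image_lt_toColex_image Fin.val_strictMono]
        apply Finset.Colex.forall_lt_mono hlt.le _ t (mem_image.2 ⟨t, ht, rfl⟩)
        simp_rw [mem_image]
        rintro _ ⟨a, ha, hab⟩
        have h5 := hAS ha
        rw [hS, mem_attachFin, mem_range] at h5
        omega
      rw [h𝒞mem]
      refine ht'low _ ?_ (toColex A) ((h𝒞mem A).1 hA) hBA.le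
      rw [hs', Finset.mem_image]
      exact ⟨B, mem_powersetCard.2 ⟨hBS, hBcard⟩, rfl⟩
  have hFsized : Set.Sized k (F : Set (Finset (Fin (2 * k)))) := fun A hA => hs A hA
  have hKK : #(∂ 𝒞) ≤ #(∂ F) := by
    have h := Finset.kruskal_katona hFsized (le_of_eq h𝒞card) h𝒞init
    convert h using 3
  have hLYM := card_mul_le_card_shadow_mul_sub (fun A hA => (h𝒞S A hA).1)
      (fun A hA => (h𝒞S A hA).2)
  rw [hScard, show 2 * k - 1 - k + 1 = k from by omega, h𝒞card] at hLYM
  have hfin : #F ≤ #(∂ 𝒞) := Nat.le_of_mul_le_mul_right hLYM (by omega)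
  omega

/-- Cardinality bound on families by their up-shadow, in the relevant regime. -/
lemma card_le_card_upShadow {m k : ℕ} (F : Finset (Finset (Fin m)))
    (hs : ∀ A ∈ F, #A = k) (h2k : 2 * k ≤ m)
    (hcf : 2 * k = m → 1 ≤ k ∧ ∀ A ∈ F, Aᶜ ∉ F) : #F ≤ #(∂⁺ F) := by
  classical
  have hup : #(∂⁺ F) = #(∂ Fᶜˢ) := by
    have h := shadow_compls (𝒜 := F)
    rw [h, card_compls]
  have hsc : ∀ A ∈ Fᶜˢ, #A = m - k := by
    intro A hA
    rw [mem_compls] at hA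
    have h1 := hs _ hA
    have h2 : #A + #Aᶜ = Fintype.card (Fin m) := Finset.card_add_card_compl A
    rw [Fintype.card_fin] at h2
    omega
  by_cases he : 2 * k = m
  · obtain ⟨hk1, hcf'⟩ := hcf he
    subst he
    have hcfc : ∀ A ∈ Fᶜˢ, Aᶜ ∉ Fᶜˢ := by
      intro A hA hAc
      rw [mem_compls] at hA hAc
      rw [compl_compl] at hAc
      exact (hcf' _ hA) (by simpa using hAc)
    have hscc : ∀ A ∈ Fᶜˢ, #A = k := by
      intro A hA
      have := hsc A hA
      omega
    have hmid := card_le_card_shadow_middle hk1 Fᶜˢ hscc hcfc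
    rw [card_compls] at hmid
    omega
  · have hlt : 2 * k < m := lt_of_le_of_ne h2k he
    have hLYM := Finset.card_mul_le_card_shadow_mul
      (𝒜 := Fᶜˢ) (r := m - k) (fun A hA => hsc A hA)
    rw [card_compls, Fintype.card_fin] at hLYM
    rw [show m - (m - k) + 1 = k + 1 from by omega] at hLYM
    have h1 : #F * (k + 1) ≤ #F * (m - k) := Nat.mul_le_mul_left _ (by omega)
    have h2 : #F ≤ #(∂ Fᶜˢ) := Nat.le_of_mul_le_mul_right (le_trans h1 hLYM) (by omega)
    omega

/-- Phase 1: push all sets up to size at least `m/2 + 1`, keeping the antichain and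
intersecting properties, without decreasing cardinality. -/
lemma exists_uniform_up {m : ℕ} :
    ∀ (N : ℕ) (F : Finset (Finset (Fin m))),
      (∑ A ∈ F, (m / 2 + 1 - #A)) = N →
      IsAntichain (· ⊆ ·) (F : Set (Finset (Fin m))) →
      (∀ A ∈ F, ∀ B ∈ F, (A ∩ B).Nonempty) →
      ∃ G : Finset (Finset (Fin m)),
        IsAntichain (· ⊆ ·) (G : Set (Finset (Fin m))) ∧
        (∀ A ∈ G, ∀ B ∈ G, (A ∩ B).Nonempty) ∧ #F ≤ #G ∧ ∀ A ∈ G, m / 2 + 1 ≤ #A := by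
  classical
  intro N
  induction N using Nat.strong_induction_on with
  | _ N ih =>
    intro F hμ hanti hint
    by_cases h0 : ∀ A ∈ F, m / 2 + 1 ≤ #A
    · exact ⟨F, hanti, hint, le_rfl, h0⟩
    push_neg at h0
    obtain ⟨A₀, hA₀, hA₀lt⟩ := h0
    have hne : (F.image card).Nonempty := ⟨#A₀, mem_image_of_mem _ hA₀⟩
    set k := (F.image card).min' hne with hk
    obtain ⟨A₁, hA₁, hA₁k⟩ := mem_image.1 ((F.image card).min'_mem hne)
    have hkmin : ∀ B ∈ F, k ≤ #B := fun B hB => min'_le _ _ (mem_image_of_mem _ hB)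
    have hklt : k < m / 2 + 1 := lt_of_le_of_lt (hkmin A₀ hA₀) hA₀lt
    set Fk := F.filter (fun A => #A = k) with hFk
    have hA₁Fk : A₁ ∈ Fk := mem_filter.2 ⟨hA₁, hA₁k⟩
    have hFkne : Fk.Nonempty := ⟨A₁, hA₁Fk⟩
    have hFkF : Fk ⊆ F := filter_subset _ _
    have hFks : ∀ A ∈ Fk, #A = k := fun A hA => (mem_filter.1 hA).2
    have hk1 : 1 ≤ k := by
      have h1 := hint A₁ hA₁ A₁ hA₁
      rw [Finset.inter_self] at h1
      have := Finset.card_pos.2 h1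
      omega
    have h2k : 2 * k ≤ m := by omega
    have hcf : 2 * k = m → 1 ≤ k ∧ ∀ A ∈ Fk, Aᶜ ∉ Fk := by
      intro _
      refine ⟨hk1, fun A hA hAc => ?_⟩
      have h1 := hint A (hFkF hA) Aᶜ (hFkF hAc)
      rw [Finset.inter_compl] at h1
      exact Finset.not_nonempty_empty h1
    have hFkup := card_le_card_upShadow Fk hFks h2k hcf
    obtain ⟨S, hSsub, hScard⟩ := Finset.exists_subset_card_eq hFkup
    have hSfact : ∀ B ∈ S, #B = k + 1 ∧ ∃ A ∈ Fk, A ⊆ B := by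
      intro B hB
      obtain ⟨A, hA, hAB, hc⟩ := mem_upShadow_iff_exists_mem_card_add_one.1 (hSsub hB)
      exact ⟨by rw [hc, hFks A hA], A, hA, hAB⟩
    have hSnotF : ∀ B ∈ S, B ∉ F := by
      intro B hB hBF
      obtain ⟨hBc, A, hAFk, hAB⟩ := hSfact B hB
      have hABne : A ≠ B := by
        intro h
        rw [h] at hAFk
        have := hFks B hAFk
        omega
      exact hanti (mem_coe.2 (hFkF hAFk)) (mem_coe.2 hBF) hABne hAB
    set G' : Finset (Finset (Fin m)) := (F \ Fk) ∪ S with hG'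
    have hdisjFS : Disjoint (F \ Fk) S := by
      rw [Finset.disjoint_left]
      intro B hB hBS
      exact hSnotF B hBS (mem_sdiff.1 hB).1
    have hG'card : #G' = #F := by
      rw [hG', card_union_of_disjoint hdisjFS, card_sdiff_of_subset hFkF, hScard]
      have := Finset.card_le_card hFkF
      omega
    -- facts about members of G'
    have hmem : ∀ X ∈ G', (X ∈ F ∧ #X ≠ k ∧ k ≤ #X) ∨ (#X = k + 1 ∧ ∃ A ∈ Fk, A ⊆ X) := by
      intro X hX
      rcases Finset.mem_union.1 hX with h | h
      · rw [mem_sdiff] at h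
        refine Or.inl ⟨h.1, ?_, hkmin X h.1⟩
        intro hc
        exact h.2 (mem_filter.2 ⟨h.1, hc⟩)
      · exact Or.inr (hSfact X h)
    have hG'anti : IsAntichain (· ⊆ ·) (G' : Set (Finset (Fin m))) := by
      intro X hX Y hY hXY hsub
      rcases hmem X (mem_coe.1 hX) with ⟨hXF, hXk, hXge⟩ | ⟨hXc, A, hAFk, hAX⟩ <;>
        rcases hmem Y (mem_coe.1 hY) with ⟨hYF, hYk, hYge⟩ | ⟨hYc, B, hBFk, hBY⟩
      · exact hanti (mem_coe.2 hXF) (mem_coe.2 hYF) hXY hsub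
      · -- X old, Y new : #X ≥ k+1 = #Y so X = Y
        have : #X ≤ #Y := Finset.card_le_card hsub
        exact hXY (Finset.eq_of_subset_of_card_le hsub (by omega))
      · -- X new, Y old : A ⊆ X ⊆ Y with A ∈ F
        have hAY : A ≠ Y := by
          intro h
          rw [h] at hAFk
          exact hYk (hFks Y hAFk)
        exact hanti (mem_coe.2 (hFkF hAFk)) (mem_coe.2 hYF) hAY (hAX.trans hsub)
      · exact hXY (Finset.eq_of_subset_of_card_le hsub (by omega))
    have hG'int : ∀ X ∈ G', ∀ Y ∈ G', (X ∩ Y).Nonempty := by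
      have key : ∀ X ∈ G', ∃ A ∈ F, A ⊆ X := by
        intro X hX
        rcases hmem X hX with ⟨hXF, _, _⟩ | ⟨_, A, hAFk, hAX⟩
        · exact ⟨X, hXF, Finset.Subset.refl _⟩
        · exact ⟨A, hFkF hAFk, hAX⟩
      intro X hX Y hY
      obtain ⟨A, hAF, hAX⟩ := key X hX
      obtain ⟨B, hBF, hBY⟩ := key Y hY
      exact (hint A hAF B hBF).mono (Finset.inter_subset_inter hAX hBY)
    -- measure decrease
    have hsum : ∑ A ∈ G', (m / 2 + 1 - #A) < N := by
      rw [hG', Finset.sum_union hdisjFS]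
      have h1 : ∑ B ∈ S, (m / 2 + 1 - #B) = #S * (m / 2 + 1 - (k + 1)) := by
        rw [Finset.sum_congr rfl (fun B hB => by rw [(hSfact B hB).1])]
        rw [Finset.sum_const, smul_eq_mul]
      have h2 : ∑ A ∈ Fk, (m / 2 + 1 - #A) = #Fk * (m / 2 + 1 - k) := by
        rw [Finset.sum_congr rfl (fun A hA => by rw [hFks A hA])]
        rw [Finset.sum_const, smul_eq_mul]
      have h3 : ∑ A ∈ F, (m / 2 + 1 - #A)
          = ∑ A ∈ F \ Fk, (m / 2 + 1 - #A) + ∑ A ∈ Fk, (m / 2 + 1 - #A) := by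
        have h4 := Finset.sum_filter_add_sum_filter_not F (fun A => #A = k)
          (fun A => m / 2 + 1 - #A)
        rw [Finset.filter_not, ← hFk] at h4
        omega
      rw [h1]
      rw [h3, h2] at hμ
      have hFkpos : 0 < #Fk := Finset.card_pos.2 hFkne
      have : #S * (m / 2 + 1 - (k + 1)) < #Fk * (m / 2 + 1 - k) := by
        rw [hScard]
        have : m / 2 + 1 - (k + 1) < m / 2 + 1 - k := by omega
        exact mul_lt_mul_of_pos_left this hFkpos
      omega
    obtain ⟨G, hGa, hGi, hGc, hGs⟩ :=
      ih _ hsum G' rfl hG'anti hG'int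
    exact ⟨G, hGa, hGi, by omega, hGs⟩

/-- Phase 2: push all sets down to size exactly `m/2 + 1`, keeping the antichain property,
without decreasing cardinality. -/
lemma exists_uniform_down {m : ℕ} :
    ∀ (N : ℕ) (F : Finset (Finset (Fin m))),
      (∑ A ∈ F, (#A - (m / 2 + 1))) = N →
      IsAntichain (· ⊆ ·) (F : Set (Finset (Fin m))) →
      (∀ A ∈ F, m / 2 + 1 ≤ #A) →
      ∃ G : Finset (Finset (Fin m)), #F ≤ #G ∧ ∀ A ∈ G, #A = m / 2 + 1 := by
  classical
  intro N
  induction N using Nat.strong_induction_on with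
  | _ N ih =>
    intro F hμ hanti hlow
    by_cases h0 : ∀ A ∈ F, #A ≤ m / 2 + 1
    · exact ⟨F, le_rfl, fun A hA => le_antisymm (h0 A hA) (hlow A hA)⟩
    push_neg at h0
    obtain ⟨A₀, hA₀, hA₀gt⟩ := h0
    have hne : (F.image card).Nonempty := ⟨#A₀, mem_image_of_mem _ hA₀⟩
    set k := (F.image card).max' hne with hk
    obtain ⟨A₁, hA₁, hA₁k⟩ := mem_image.1 ((F.image card).max'_mem hne)
    have hkmax : ∀ B ∈ F, #B ≤ k := fun B hB => le_max' _ _ (mem_image_of_mem _ hB)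
    have hkgt : m / 2 + 1 < k := lt_of_lt_of_le hA₀gt (hkmax A₀ hA₀)
    have hkm : k ≤ m := by
      have : A₁ ⊆ univ := subset_univ _
      have := Finset.card_le_card this
      rw [card_univ, Fintype.card_fin] at this
      omega
    set Fk := F.filter (fun A => #A = k) with hFk
    have hA₁Fk : A₁ ∈ Fk := mem_filter.2 ⟨hA₁, hA₁k⟩
    have hFkne : Fk.Nonempty := ⟨A₁, hA₁Fk⟩
    have hFkF : Fk ⊆ F := filter_subset _ _
    have hFks : ∀ A ∈ Fk, #A = k := fun A hA => (mem_filter.1 hA).2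
    -- shadow cardinality bound from local LYM
    have hLYM := Finset.card_mul_le_card_shadow_mul
      (𝒜 := Fk) (r := k) (fun A hA => hFks A hA)
    rw [Fintype.card_fin] at hLYM
    have hfac : m - k + 1 ≤ k := by omega
    have hFkdown : #Fk ≤ #(∂ Fk) := by
      have h1 : #Fk * k ≤ #(∂ Fk) * k :=
        le_trans hLYM (Nat.mul_le_mul_left _ hfac)
      exact Nat.le_of_mul_le_mul_right h1 (by omega)
    obtain ⟨S, hSsub, hScard⟩ := Finset.exists_subset_card_eq hFkdown
    have hSfact : ∀ B ∈ S, #B + 1 = k ∧ ∃ A ∈ Fk, B ⊆ A := by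
      intro B hB
      obtain ⟨A, hA, hBA, hc⟩ := mem_shadow_iff_exists_mem_card_add_one.1 (hSsub hB)
      refine ⟨by rw [← hFks A hA, hc], A, hA, hBA⟩
    have hSnotF : ∀ B ∈ S, B ∉ F := by
      intro B hB hBF
      obtain ⟨hBc, A, hAFk, hBA⟩ := hSfact B hB
      have hABne : B ≠ A := by
        intro h
        rw [h] at hBc
        have := hFks A hAFk
        omega
      exact hanti (mem_coe.2 hBF) (mem_coe.2 (hFkF hAFk)) hABne hBA
    set G' : Finset (Finset (Fin m)) := (F \ Fk) ∪ S with hG'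
    have hdisjFS : Disjoint (F \ Fk) S := by
      rw [Finset.disjoint_left]
      intro B hB hBS
      exact hSnotF B hBS (mem_sdiff.1 hB).1
    have hG'card : #G' = #F := by
      rw [hG', card_union_of_disjoint hdisjFS, card_sdiff_of_subset hFkF, hScard]
      have := Finset.card_le_card hFkF
      omega
    have hmem : ∀ X ∈ G', (X ∈ F ∧ #X ≠ k ∧ m / 2 + 1 ≤ #X)
        ∨ (#X + 1 = k ∧ ∃ A ∈ Fk, X ⊆ A) := by
      intro X hX
      rcases Finset.mem_union.1 hX with h | h
      · rw [mem_sdiff] at h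
        refine Or.inl ⟨h.1, ?_, hlow X h.1⟩
        intro hc
        exact h.2 (mem_filter.2 ⟨h.1, hc⟩)
      · exact Or.inr (hSfact X h)
    have hG'anti : IsAntichain (· ⊆ ·) (G' : Set (Finset (Fin m))) := by
      intro X hX Y hY hXY hsub
      rcases hmem X (mem_coe.1 hX) with ⟨hXF, hXk, hXge⟩ | ⟨hXc, A, hAFk, hXA⟩ <;>
        rcases hmem Y (mem_coe.1 hY) with ⟨hYF, hYk, hYge⟩ | ⟨hYc, B, hBFk, hYB⟩
      · exact hanti (mem_coe.2 hXF) (mem_coe.2 hYF) hXY hsub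
      · -- X old, Y new : X ⊆ Y ⊆ B ∈ Fk, X ≠ B
        have hXB : X ≠ B := by
          intro h
          rw [h] at hXF hXk
          exact hXk (hFks B hBFk)
        exact hanti (mem_coe.2 hXF) (mem_coe.2 (hFkF hBFk)) hXB (hsub.trans hYB)
      · -- X new, Y old : #Y ≤ k - 1 = #X, so X = Y
        have h1 : #Y ≤ k := hkmax Y hYF
        exact hXY (Finset.eq_of_subset_of_card_le hsub (by omega))
      · exact hXY (Finset.eq_of_subset_of_card_le hsub (by omega))
    have hG'low : ∀ A ∈ G', m / 2 + 1 ≤ #A := by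
      intro X hX
      rcases hmem X hX with ⟨_, _, h⟩ | ⟨h, _⟩
      · exact h
      · omega
    have hsum : ∑ A ∈ G', (#A - (m / 2 + 1)) < N := by
      rw [hG', Finset.sum_union hdisjFS]
      have h1 : ∑ B ∈ S, (#B - (m / 2 + 1)) = #S * (k - 1 - (m / 2 + 1)) := by
        rw [Finset.sum_congr rfl (fun B hB => by
          have := (hSfact B hB).1
          have hB' : #B = k - 1 := by omega
          rw [hB'])]
        rw [Finset.sum_const, smul_eq_mul]
      have h2 : ∑ A ∈ Fk, (#A - (m / 2 + 1)) = #Fk * (k - (m / 2 + 1)) := by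
        rw [Finset.sum_congr rfl (fun A hA => by rw [hFks A hA])]
        rw [Finset.sum_const, smul_eq_mul]
      have h3 : ∑ A ∈ F, (#A - (m / 2 + 1))
          = ∑ A ∈ F \ Fk, (#A - (m / 2 + 1)) + ∑ A ∈ Fk, (#A - (m / 2 + 1)) := by
        have h4 := Finset.sum_filter_add_sum_filter_not F (fun A => #A = k)
          (fun A => #A - (m / 2 + 1))
        rw [Finset.filter_not, ← hFk] at h4
        omega
      rw [h1]
      rw [h3, h2] at hμ
      have hFkpos : 0 < #Fk := Finset.card_pos.2 hFkne
      have hlt : #S * (k - 1 - (m / 2 + 1)) < #Fk * (k - (m / 2 + 1)) := by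
        rw [hScard]
        have : k - 1 - (m / 2 + 1) < k - (m / 2 + 1) := by omega
        exact mul_lt_mul_of_pos_left this hFkpos
      omega
    obtain ⟨G, hGc, hGs⟩ := ih _ hsum G' rfl hG'anti hG'low
    exact ⟨G, by omega, hGs⟩

/-- **Milner's theorem** for 1-intersecting antichains. -/
theorem milner_bound {m : ℕ} (F : Finset (Finset (Fin m)))
    (hanti : IsAntichain (· ⊆ ·) (F : Set (Finset (Fin m))))
    (hint : ∀ A ∈ F, ∀ B ∈ F, (A ∩ B).Nonempty) : #F ≤ m.choose (m / 2 + 1) := by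
  classical
  obtain ⟨G₁, hG₁a, _, hG₁c, hG₁s⟩ := exists_uniform_up _ F rfl hanti hint
  obtain ⟨G₂, hG₂c, hG₂s⟩ := exists_uniform_down _ G₁ rfl hG₁a hG₁s
  have hsub : G₂ ⊆ powersetCard (m / 2 + 1) univ := fun A hA =>
    mem_powersetCard.2 ⟨subset_univ _, hG₂s A hA⟩
  have := Finset.card_le_card hsub
  rw [Finset.card_powersetCard, card_univ, Fintype.card_fin] at this
  omega

lemma qi_compl_left {n : ℕ} {u v : Fin n → Fin 2} (h : QIVec u v) :
    QIVec (fun t => u t + 1) v := by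
  intro a b
  obtain ⟨i, h1, h2⟩ := h (a + 1) b
  refine ⟨i, ?_, h2⟩
  show u i + 1 = a
  rw [h1]
  exact (by decide : ∀ x : Fin 2, x + 1 + 1 = x) a

lemma qi_compl_right {n : ℕ} {u v : Fin n → Fin 2} (h : QIVec u v) :
    QIVec u (fun t => v t + 1) := by
  intro a b
  obtain ⟨i, h1, h2⟩ := h a (b + 1)
  refine ⟨i, h1, ?_⟩
  show v i + 1 = b
  rw [h2]
  exact (by decide : ∀ x : Fin 2, x + 1 + 1 = x) b

/-- The lower-bound direction: a covering array needs `r ≤ C(n-1, ⌊n/2⌋-1)`. -/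
lemma bound_dir {r m : ℕ} (hr : 2 ≤ r) (C : Fin r → Fin (m + 1) → Fin 2)
    (hC : ∀ i j, i ≠ j → QIVec (C i) (C j)) :
    r ≤ m.choose ((m + 1) / 2 - 1) := by
  classical
  set D : Fin r → Fin (m + 1) → Fin 2 :=
    fun i => if C i 0 = 0 then C i else fun j => C i j + 1 with hD
  have hD0 : ∀ i, D i 0 = 0 := by
    intro i
    rw [hD]
    dsimp only
    split_ifs with h
    · exact h
    · have h1 : C i 0 = 1 := by omega
      show C i 0 + 1 = 0
      rw [h1]
      decide
  have hDQI : ∀ i j, i ≠ j → QIVec (D i) (D j) := by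
    intro i j hij
    rw [hD]
    dsimp only
    split_ifs with h1 h2 h2
    · exact hC i j hij
    · exact qi_compl_right (hC i j hij)
    · exact qi_compl_left (hC i j hij)
    · exact qi_compl_left (qi_compl_right (hC i j hij))
  set g : Fin r → Finset (Fin m) := fun i => univ.filter (fun x => D i x.succ = 1) with hg
  have key : ∀ i j, i ≠ j → (g i ∩ g j).Nonempty ∧ (g i \ g j).Nonempty := by
    intro i j hij
    constructor
    · obtain ⟨t, h1, h2⟩ := hDQI i j hij 1 1
      have ht0 : t ≠ 0 := by
        intro h
        rw [h, hD0 i] at h1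
        exact absurd h1 (by decide)
      obtain ⟨x, rfl⟩ := Fin.exists_succ_eq.2 ht0
      exact ⟨x, Finset.mem_inter.2 ⟨mem_filter.2 ⟨mem_univ _, h1⟩, mem_filter.2 ⟨mem_univ _, h2⟩⟩⟩
    · obtain ⟨t, h1, h2⟩ := hDQI i j hij 1 0
      have ht0 : t ≠ 0 := by
        intro h
        rw [h, hD0 i] at h1
        exact absurd h1 (by decide)
      obtain ⟨x, rfl⟩ := Fin.exists_succ_eq.2 ht0
      refine ⟨x, Finset.mem_sdiff.2 ⟨mem_filter.2 ⟨mem_univ _, h1⟩, ?_⟩⟩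
      intro hx
      have := (mem_filter.1 hx).2
      rw [h2] at this
      exact absurd this (by decide)
  have hm1 : 1 ≤ m := by
    obtain ⟨x, -⟩ := (key ⟨0, by omega⟩ ⟨1, by omega⟩ (by simp [Fin.ext_iff])).1
    exact x.pos
  have ginj : Function.Injective g := by
    intro i j h
    by_contra hij
    obtain ⟨x, hx⟩ := (key i j hij).2
    rw [h] at hx
    simp at hx
  set F : Finset (Finset (Fin m)) := univ.image g with hF
  have hFcard : #F = r := by
    rw [hF, Finset.card_image_of_injective _ ginj, card_univ, Fintype.card_fin]
  have hanti : IsAntichain (· ⊆ ·) (F : Set (Finset (Fin m))) := by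
    intro X hX Y hY hne hsub
    obtain ⟨i, -, rfl⟩ := Finset.mem_image.1 (mem_coe.1 hX)
    obtain ⟨j, -, rfl⟩ := Finset.mem_image.1 (mem_coe.1 hY)
    have hij : i ≠ j := fun h => hne (by rw [h])
    obtain ⟨x, hx⟩ := (key i j hij).2
    rw [Finset.mem_sdiff] at hx
    exact hx.2 (hsub hx.1)
  have hint : ∀ A ∈ F, ∀ B ∈ F, (A ∩ B).Nonempty := by
    intro X hX Y hY
    obtain ⟨i, -, rfl⟩ := Finset.mem_image.1 hX
    obtain ⟨j, -, rfl⟩ := Finset.mem_image.1 hY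
    by_cases hij : i = j
    · subst hij
      rw [Finset.inter_self]
      set j' : Fin r := if i = ⟨0, by omega⟩ then ⟨1, by omega⟩ else ⟨0, by omega⟩ with hj'
      have hij' : i ≠ j' := by
        rw [hj']
        split_ifs with h
        · rw [h]
          simp [Fin.ext_iff]
        · exact h
      exact ((key i j' hij').1).mono Finset.inter_subset_left
    · exact (key i j hij).1
  have hbound := milner_bound F hanti hint
  rw [hFcard] at hbound
  have heq : m.choose (m / 2 + 1) = m.choose ((m + 1) / 2 - 1) := by
    have h2 := Nat.choose_symm (show m / 2 + 1 ≤ m by omega)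
    rw [← h2]
    congr 1
    omega
  omega

/-- The upper-bound direction: construction of a covering array. -/
lemma construct_dir {r m : ℕ} (hr : 2 ≤ r) (hm : 3 ≤ m)
    (h : r ≤ m.choose ((m + 1) / 2 - 1)) :
    ∃ C : Fin r → Fin (m + 1) → Fin 2, ∀ i j, i ≠ j → QIVec (C i) (C j) := by
  classical
  set k : ℕ := m / 2 + 1 with hk
  have hcount : r ≤ m.choose k := by
    have h2 := Nat.choose_symm (show k ≤ m by omega)
    have h3 : m - k = (m + 1) / 2 - 1 := by omega
    rw [h3] at h2
    omega
  set P : Finset (Finset (Fin m)) := powersetCard k univ with hP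
  have hPcard : #P = m.choose k := by
    rw [hP, Finset.card_powersetCard, card_univ, Fintype.card_fin]
  have hle : r ≤ #P := by omega
  set A : Fin r → Finset (Fin m) := fun i => (P.equivFin.symm (Fin.castLE hle i) : P).1
    with hA
  have hAmem : ∀ i, A i ∈ P := fun i => (P.equivFin.symm _).2
  have hAcard : ∀ i, #(A i) = k := fun i => (mem_powersetCard.1 (hAmem i)).2
  have hAinj : ∀ i j : Fin r, i ≠ j → A i ≠ A j := by
    intro i j hij hAij
    apply hij
    have h1 : P.equivFin.symm (Fin.castLE hle i) = P.equivFin.symm (Fin.castLE hle j) :=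
      Subtype.ext hAij
    have h2 := P.equivFin.symm.injective h1
    have h3 : (Fin.castLE hle i : Fin #P).val = (Fin.castLE hle j).val := by rw [h2]
    exact Fin.ext h3
  have hdiff : ∀ i j : Fin r, i ≠ j → (A i \ A j).Nonempty := by
    intro i j hij
    rw [Finset.sdiff_nonempty]
    intro hsub
    exact hAinj i j hij (Finset.eq_of_subset_of_card_le hsub (by rw [hAcard, hAcard]))
  have hinter : ∀ i j : Fin r, (A i ∩ A j).Nonempty := by
    intro i j
    have h1 := Finset.card_inter_add_card_union (A i) (A j)
    have h2 : #(A i ∪ A j) ≤ m := by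
      have := Finset.card_le_card (Finset.subset_univ (A i ∪ A j))
      rwa [card_univ, Fintype.card_fin] at this
    rw [hAcard, hAcard] at h1
    have : 0 < #(A i ∩ A j) := by omega
    exact Finset.card_pos.1 this
  refine ⟨fun i t => Fin.cases (0 : Fin 2) (fun x => if x ∈ A i then 1 else 0) t, ?_⟩
  intro i j hij a b
  fin_cases a <;> fin_cases b
  · exact ⟨0, by simp, by simp⟩
  · obtain ⟨x, hx⟩ := hdiff j i hij.symm
    rw [Finset.mem_sdiff] at hx
    exact ⟨x.succ, by simp [hx.2], by simp [hx.1]⟩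
  · obtain ⟨x, hx⟩ := hdiff i j hij
    rw [Finset.mem_sdiff] at hx
    exact ⟨x.succ, by simp [hx.1], by simp [hx.2]⟩
  · obtain ⟨x, hx⟩ := hinter i j
    rw [Finset.mem_inter] at hx
    exact ⟨x.succ, by simp [hx.1], by simp [hx.2]⟩

/-- For every `r ≥ 2`, the minimum number of columns of a binary covering array
with `r` rows is `CAN(r,2) = min{ n : C(n−1, ⌊n/2⌋−1) ≥ r }`. -/
theorem CAN_binary (r : ℕ) (hr : 2 ≤ r) :
    sInf {n | ∃ C : Fin r → Fin n → Fin 2, ∀ i j, i ≠ j → QIVec (C i) (C j)} =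
      sInf {n | r ≤ (n - 1).choose (n / 2 - 1)} := by
  have hset : {n | ∃ C : Fin r → Fin n → Fin 2, ∀ i j, i ≠ j → QIVec (C i) (C j)} =
      {n | r ≤ (n - 1).choose (n / 2 - 1)} := by
    ext n
    simp only [Set.mem_setOf_eq]
    constructor
    · rintro ⟨C, hC⟩
      rcases n with _ | m
      · obtain ⟨i, -, -⟩ := hC ⟨0, by omega⟩ ⟨1, by omega⟩ (by simp [Fin.ext_iff]) 0 0
        exact i.elim0
      · have := bound_dir hr C hC
        simpa using this
    · intro h
      have hm : 4 ≤ n := by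
        by_contra h4
        interval_cases n <;> simp_all <;> omega
      obtain ⟨m, rfl⟩ : ∃ m, n = m + 1 := ⟨n - 1, by omega⟩
      have h' : r ≤ m.choose ((m + 1) / 2 - 1) := by simpa using h
      exact construct_dir hr (by omega) h'
  rw [hset]
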